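/- Assume that for every f ∈ ℝ^M_{≥0} with f ≠ 0 there exists i₀ ∈ {1,…,N} such that ⟨t_{i₀}/\hat{t}, f⟩ < 0 (no risk free investment). Then for every f ∈ G \ {0} there exists s₀ = s₀(f) > 0 such that TWR_N(s₀ f) = 0; moreover s₀ f ∈ ∂G₀, i.e. HPR_i(s₀ f) ≥ 0 for all i and HPR_{j₀}(s₀ f) = 0 for some j₀. -/

import Mathlib

/-- Under the no-risk-free-investment assumption, every nonzero admissible
direction can be scaled so that the TWR vanishes, landing in ∂G₀. -/
theorem stmt4 (N M : ℕ) (T : Fin N → Fin M → ℝ) (that : Fin M → ℝ)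
    (hthat : ∀ k, 0 < that k)
    (ha : ∀ f : Fin M → ℝ, (∀ k, 0 ≤ f k) → f ≠ 0 →
      ∃ i, ∑ k, (T i k / that k) * f k < 0)
    (f : Fin M → ℝ) (hfpos : ∀ k, 0 ≤ f k)
    (hfG : ∀ i, 0 ≤ 1 + ∑ k, (T i k / that k) * f k)
    (hne : f ≠ 0) :
    ∃ s₀ : ℝ, 0 < s₀ ∧
      (∏ i, (1 + ∑ k, (T i k / that k) * (s₀ * f k))) = 0 ∧
      (∀ i, 0 ≤ 1 + ∑ k, (T i k / that k) * (s₀ * f k)) ∧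
      ∃ j, 1 + ∑ k, (T j k / that k) * (s₀ * f k) = 0 := by
  set c : Fin N → ℝ := fun i => ∑ k, (T i k / that k) * f k with hc
  obtain ⟨i₀, hi₀⟩ := ha f hfpos hne
  set S : Finset (Fin N) := Finset.univ.filter (fun i => c i < 0) with hS
  have hSne : S.Nonempty := ⟨i₀, by simp [hS, hi₀]; exact hi₀⟩
  obtain ⟨j, hjS, hjmin⟩ := S.exists_min_image (fun i => -1 / c i) hSne
  have hcj : c j < 0 := (Finset.mem_filter.mp hjS).2
  set s₀ : ℝ := -1 / c j with hs₀
  have hs₀pos : 0 < s₀ := by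
    rw [hs₀]
    exact div_pos_of_neg_of_neg (by norm_num) hcj
  have hsum : ∀ i, ∑ k, (T i k / that k) * (s₀ * f k) = 1 + s₀ * c i - 1 := by
    intro i
    rw [hc]
    rw [Finset.mul_sum]
    ring_nf
    congr 1
    ext k
    ring
  have key : ∀ i, 1 + ∑ k, (T i k / that k) * (s₀ * f k) = 1 + s₀ * c i := by
    intro i; rw [hsum i]; ring
  have hnonneg : ∀ i, 0 ≤ 1 + s₀ * c i := by
    intro i
    by_cases hci : c i < 0
    · have hiS : i ∈ S := by simp [hS, hci]
      have := hjmin i hiS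
      -- s₀ = -1/c j ≤ -1/c i, so s₀ * c i ≥ -1
      have h1 : s₀ ≤ -1 / c i := this
      have h2 : (-1 / c i) * c i = -1 := by
        field_simp
        rw [div_self hci.ne]
      nlinarith [mul_le_mul_of_nonpos_right h1 (le_of_lt hci)]
    · push_neg at hci
      nlinarith
  have hzero : 1 + s₀ * c j = 0 := by
    rw [hs₀]; field_simp
    rw [div_self hcj.ne]; ring
  refine ⟨s₀, hs₀pos, ?_, fun i => by rw [key i]; exact hnonneg i, ⟨j, by rw [key j]; exact hzero⟩⟩
  apply Finset.prod_eq_zero (Finset.mem_univ j)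
  rw [key j]; exact hzero
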